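/- In any Leamer monoid S_Γ^s, the minimum factorization length function is bounded: there exists N such that every nonzero element of S_Γ^s has a factorization into at most N atoms. Consequently, S_Γ^s is not fully elastic (the set of elasticities is not all of ℚ ∩ [1,∞)). -/
import Mathlib


/-- The Leamer monoid as a subset of ℕ × ℕ: (0,0) together with all (x,n), n ≥ 1,
such that x + i*s ∈ Γ for all 0 ≤ i ≤ n. -/
def Leamer (Γ : AddSubmonoid ℕ) (s : ℕ) : Set (ℕ × ℕ) :=
  {p | p = (0, 0) ∨ (1 ≤ p.2 ∧ ∀ i ≤ p.2, p.1 + i * s ∈ Γ)}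

/-- An irreducible (atom) of a subset S of ℕ × ℕ: a nonzero element of S that is not the
sum of two nonzero elements of S. -/
def LIrred (S : Set (ℕ × ℕ)) (z : ℕ × ℕ) : Prop :=
  z ∈ S ∧ z ≠ 0 ∧ ∀ a b : ℕ × ℕ, a ∈ S → b ∈ S → a ≠ 0 → b ≠ 0 → z ≠ a + b

/-- A reducible element of S: an element of S that is the sum of two nonzero elements of S. -/
def LReducible (S : Set (ℕ × ℕ)) (z : ℕ × ℕ) : Prop :=
  z ∈ S ∧ ∃ a b : ℕ × ℕ, a ∈ S ∧ b ∈ S ∧ a ≠ 0 ∧ b ≠ 0 ∧ z = a + b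

/-- The set of factorization lengths of z into irreducibles of S. -/
def LSet (S : Set (ℕ × ℕ)) (z : ℕ × ℕ) : Set ℕ :=
  {r | ∃ l : Multiset (ℕ × ℕ), Multiset.card l = r ∧ (∀ a ∈ l, LIrred S a) ∧ l.sum = z}

/-- The Delta set of z: differences of successive factorization lengths. -/
def LDelta (S : Set (ℕ × ℕ)) (z : ℕ × ℕ) : Set ℕ :=
  {d | ∃ a b, a ∈ LSet S z ∧ b ∈ LSet S z ∧ a < b ∧
    (∀ c, a < c → c < b → c ∉ LSet S z) ∧ d = b - a}

/-- The Delta set of the monoid S. -/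
def LDeltaMonoid (S : Set (ℕ × ℕ)) : Set ℕ :=
  {d | ∃ z, z ∈ S ∧ z ≠ 0 ∧ d ∈ LDelta S z}

/-- The Frobenius number of a numerical monoid Γ. -/
noncomputable def Frob (Γ : AddSubmonoid ℕ) : ℕ := sSup {x | x ∉ Γ}

/-- The numerical monoid generated by the arithmetic sequence m, m+s, ..., m+ks. -/
def ArithGamma (m k s : ℕ) : AddSubmonoid ℕ :=
  AddSubmonoid.closure {v | ∃ j ≤ k, v = m + j * s}

lemma leamer_pos {Γ : AddSubmonoid ℕ} {s : ℕ} (hs : s ∉ Γ) {z : ℕ × ℕ}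
    (hz : z ∈ Leamer Γ s) (h0 : z ≠ 0) : 1 ≤ z.1 ∧ 1 ≤ z.2 := by
  rcases hz with h | ⟨h1, h2⟩
  · exact absurd h (by simpa [Prod.ext_iff, Prod.eq_iff_fst_eq_snd_eq] using h0)
  · refine ⟨?_, h1⟩
    by_contra h
    have hz1 : z.1 = 0 := by omega
    have := h2 1 h1
    rw [hz1] at this
    simp at this
    exact hs this

lemma irred_one {Γ : AddSubmonoid ℕ} {s : ℕ} (hs : s ∉ Γ) {x : ℕ}
    (hx : (x, 1) ∈ Leamer Γ s) : LIrred (Leamer Γ s) (x, 1) := by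
  refine ⟨hx, by simp [Prod.ext_iff], ?_⟩
  intro a b ha hb ha0 hb0 heq
  have h1 := (leamer_pos hs ha ha0).2
  have h2 := (leamer_pos hs hb hb0).2
  have := congrArg Prod.snd heq
  simp [Prod.snd_add] at this
  omega

lemma exists_fact {Γ : AddSubmonoid ℕ} {s : ℕ} (hs : s ∉ Γ) :
    ∀ x : ℕ, ∀ z ∈ Leamer Γ s, z ≠ 0 → z.1 ≤ x →
    ∃ l : Multiset (ℕ × ℕ), Multiset.card l ≤ z.1 ∧
      (∀ a ∈ l, LIrred (Leamer Γ s) a) ∧ l.sum = z := by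
  intro x
  induction x with
  | zero =>
    intro z hz h0 hle
    exact absurd hle (by have := (leamer_pos hs hz h0).1; omega)
  | succ n ih =>
    intro z hz h0 hle
    by_cases hirr : LIrred (Leamer Γ s) z
    · exact ⟨{z}, by simpa using (leamer_pos hs hz h0).1, by simpa using hirr, by simp⟩
    · have hred : ∃ a b : ℕ × ℕ, a ∈ Leamer Γ s ∧ b ∈ Leamer Γ s ∧ a ≠ 0 ∧ b ≠ 0 ∧ z = a + b := by
        have h : ¬ ∀ a b : ℕ × ℕ, a ∈ Leamer Γ s → b ∈ Leamer Γ s → a ≠ 0 → b ≠ 0 → z ≠ a + b :=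
          fun h => hirr ⟨hz, h0, h⟩
        push_neg at h
        obtain ⟨a, b, ha, hb, ha0, hb0, heq⟩ := h
        exact ⟨a, b, ha, hb, ha0, hb0, heq⟩
      obtain ⟨a, b, ha, hb, ha0, hb0, heq⟩ := hred
      have hap := leamer_pos hs ha ha0
      have hbp := leamer_pos hs hb hb0
      have hz1 : z.1 = a.1 + b.1 := by rw [heq]; rfl
      obtain ⟨la, hca, hia, hsa⟩ := ih a ha ha0 (by omega)
      obtain ⟨lb, hcb, hib, hsb⟩ := ih b hb hb0 (by omega)
      refine ⟨la + lb, ?_, ?_, ?_⟩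
      · simp only [Multiset.card_add]; omega
      · intro c hc
        rcases Multiset.mem_add.mp hc with h | h
        · exact hia c h
        · exact hib c h
      · rw [Multiset.sum_add, hsa, hsb, heq]

theorem stmt10 (Γ : AddSubmonoid ℕ) (hΓ : {x : ℕ | x ∉ Γ}.Finite) (s : ℕ) (hs : s ∉ Γ) :
    (∃ N : ℕ, ∀ z ∈ Leamer Γ s, z ≠ 0 → ∃ r ∈ LSet (Leamer Γ s) z, r ≤ N) ∧
    ¬(∀ q : ℚ, 1 ≤ q → ∃ z : ℕ × ℕ, z ∈ Leamer Γ s ∧ z ≠ 0 ∧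
        ∃ a b : ℕ, a ∈ LSet (Leamer Γ s) z ∧ b ∈ LSet (Leamer Γ s) z ∧
          (∀ r ∈ LSet (Leamer Γ s) z, r ≤ a) ∧ (∀ r ∈ LSet (Leamer Γ s) z, b ≤ r) ∧
          (a : ℚ) / (b : ℚ) = q) := by
  classical
  obtain ⟨M, hM1, hM⟩ : ∃ M : ℕ, 1 ≤ M ∧ ∀ y, M ≤ y → y ∈ Γ := by
    obtain ⟨B, hB⟩ := hΓ.bddAbove
    refine ⟨B + 1, by omega, fun y hy => by_contra fun h => ?_⟩
    have := hB h
    omega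
  -- the key bound
  have key : ∀ z ∈ Leamer Γ s, z ≠ 0 → ∃ r ∈ LSet (Leamer Γ s) z, r ≤ 2 * M := by
    intro z hz h0
    have hzp := leamer_pos hs hz h0
    by_cases hsmall : z.1 ≤ 2 * M
    · obtain ⟨l, hc, hi, hsum⟩ := exists_fact hs z.1 z hz h0 le_rfl
      exact ⟨Multiset.card l, ⟨l, rfl, hi, hsum⟩, by omega⟩
    · by_cases hn : z.2 = 1
      · refine ⟨1, ⟨{z}, by simp, ?_, by simp⟩, by omega⟩
        intro c hc
        rw [Multiset.mem_singleton.mp hc]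
        have : z = (z.1, 1) := by rw [← hn]
        rw [this]
        exact irred_one hs (this ▸ hz)
      · -- z.1 > 2M, z.2 ≥ 2
        have hn2 : 2 ≤ z.2 := by omega
        have haS : ((z.1 - M, 1) : ℕ × ℕ) ∈ Leamer Γ s := by
          refine Or.inr ⟨le_refl 1, fun i hi => hM _ ?_⟩
          calc M ≤ z.1 - M := by omega
            _ ≤ z.1 - M + i * s := Nat.le_add_right _ _
        have hbS : ((M, z.2 - 1) : ℕ × ℕ) ∈ Leamer Γ s := by
          refine Or.inr ⟨by omega, fun i hi => hM _ (Nat.le_add_right _ _)⟩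
        have hb0 : ((M, z.2 - 1) : ℕ × ℕ) ≠ 0 := by
          simp [Prod.ext_iff]; omega
        obtain ⟨lb, hcb, hib, hsb⟩ := exists_fact hs M _ hbS hb0 le_rfl
        refine ⟨Multiset.card lb + 1, ⟨(z.1 - M, 1) ::ₘ lb, by simp, ?_, ?_⟩, by
          simp at hcb; omega⟩
        · intro c hc
          rcases Multiset.mem_cons.mp hc with h | h
          · rw [h]; exact irred_one hs haS
          · exact hib c h
        · rw [Multiset.sum_cons, hsb]
          ext <;> simp <;> omega
  constructor
  · exact ⟨2 * M, key⟩
  · intro hfull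
    set N := 2 * M with hN
    have hq1 : (1 : ℚ) ≤ ((N : ℚ) + 2) / ((N : ℚ) + 1) := by
      rw [le_div_iff₀ (by positivity)]
      linarith
    obtain ⟨z, hzS, hz0, a, b, haL, hbL, hamax, hbmin, hq⟩ := hfull _ hq1
    obtain ⟨r, hrL, hrN⟩ := key z hzS hz0
    have hbN : b ≤ N := le_trans (hbmin r hrL) hrN
    have hb0 : b ≠ 0 := by
      intro h
      obtain ⟨l, hcl, _, hsum⟩ := hbL
      rw [h, Multiset.card_eq_zero] at hcl
      rw [hcl] at hsum
      exact hz0 (by simpa using hsum.symm)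
    have hbQ : ((b : ℚ)) ≠ 0 := by exact_mod_cast hb0
    rw [div_eq_div_iff hbQ (by positivity)] at hq
    have hnat : a * (N + 1) = (N + 2) * b := by exact_mod_cast hq
    have hdvd : (N + 1) ∣ b := by
      have hcop : Nat.Coprime (N + 1) (N + 2) := by
        have h2 : N + 2 = (N + 1) + 1 := by omega
        rw [h2]
        exact Nat.coprime_self_add_right.mpr (Nat.coprime_one_right _)
      exact hcop.dvd_of_dvd_mul_right ⟨a, by rw [mul_comm b, ← hnat, mul_comm]⟩
    have := Nat.le_of_dvd (by omega) hdvd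
    omega
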